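/- Fix γ > 0, B > 0, δ > 0 and a sign ε ∈ {+1, −1}. For each integer N ≥ 1 and each r ≠ 0 there is a unique x ∈ (−N^δ, N^δ) with x·r > 0 satisfying (2√(x² + B²/4) + εB)·x / √(1 − x²·N^{−2δ}) = π·N^{2δ−1}/(γ r); denote it x_{N,B,ε}(r). Then: (i) if δ > 1/2, lim_{N→∞} N^{1/2−δ}·x_{N,B,ε}(r) = sign(r)·√(π/(2γ))·|r|^{−1/2} for both signs ε; (ii) if δ = 1/2, lim_{N→∞} x_{N,B,ε}(r) = x_{B,ε}(r), where x_{B,ε}(r) is the unique real solution of (2√(x² + B²/4) + εB)·x = π/(γ r); (iii) if 0 < δ < 1/2, lim_{N→∞} N^{(1−2δ)/3}·x_{N,B,−}(r) = sign(r)·(π/(2γ))^{1/3}·B^{1/3}·|r|^{−1/3}. -/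

import Mathlib

open Filter Topology

private lemma sqrt_ge (B x : ℝ) (hB : 0 < B) : B / 2 ≤ Real.sqrt (x ^ 2 + B ^ 2 / 4) := by
  rw [show B / 2 = Real.sqrt ((B / 2) ^ 2) from (Real.sqrt_sq (by positivity)).symm]
  apply Real.sqrt_le_sqrt; nlinarith [sq_nonneg x]

private lemma sqrt_gt (B x : ℝ) (hB : 0 < B) (hx : x ≠ 0) :
    B / 2 < Real.sqrt (x ^ 2 + B ^ 2 / 4) := by
  rw [show B / 2 = Real.sqrt ((B / 2) ^ 2) from (Real.sqrt_sq (by positivity)).symm]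
  apply Real.sqrt_lt_sqrt (by positivity)
  have : 0 < x ^ 2 := by positivity
  nlinarith

private lemma coef_nonneg (B ε x : ℝ) (hB : 0 < B) (hε : ε = 1 ∨ ε = -1) :
    0 ≤ 2 * Real.sqrt (x ^ 2 + B ^ 2 / 4) + ε * B := by
  have h := sqrt_ge B x hB
  rcases hε with h1 | h1 <;> subst h1 <;> nlinarith

private lemma coef_pos (B ε x : ℝ) (hB : 0 < B) (hε : ε = 1 ∨ ε = -1) (hx : x ≠ 0) :
    0 < 2 * Real.sqrt (x ^ 2 + B ^ 2 / 4) + ε * B := by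
  have h := sqrt_gt B x hB hx
  rcases hε with h1 | h1 <;> subst h1 <;> nlinarith

private lemma g_mono (B ε : ℝ) (hB : 0 < B) (hε : ε = 1 ∨ ε = -1) :
    StrictMono (fun x : ℝ => (2 * Real.sqrt (x ^ 2 + B ^ 2 / 4) + ε * B) * x) := by
  have base : ∀ a b : ℝ, 0 ≤ a → a < b →
      (2 * Real.sqrt (a ^ 2 + B ^ 2 / 4) - B) * a < (2 * Real.sqrt (b ^ 2 + B ^ 2 / 4) - B) * b := by
    intro a b ha hab
    have h1 : Real.sqrt (a ^ 2 + B ^ 2 / 4) ≤ Real.sqrt (b ^ 2 + B ^ 2 / 4) :=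
      Real.sqrt_le_sqrt (by nlinarith)
    have h2 : 0 ≤ 2 * Real.sqrt (a ^ 2 + B ^ 2 / 4) - B := by linarith [sqrt_ge B a hB]
    have h3 : 0 < 2 * Real.sqrt (b ^ 2 + B ^ 2 / 4) - B := by
      have hb : b ≠ 0 := by intro h; rw [h] at hab; linarith
      linarith [sqrt_gt B b hB hb]
    nlinarith
  have gm : StrictMono (fun x : ℝ => (2 * Real.sqrt (x ^ 2 + B ^ 2 / 4) - B) * x) := by
    intro a b hab
    simp only
    rcases le_or_gt 0 a with ha | ha
    · exact base a b ha hab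
    rcases le_or_gt b 0 with hb | hb
    · have := base (-b) (-a) (by linarith) (by linarith)
      rw [neg_sq, neg_sq] at this
      nlinarith
    · have h2 : 0 < 2 * Real.sqrt (a ^ 2 + B ^ 2 / 4) - B := by
        linarith [sqrt_gt B a hB (ne_of_lt ha)]
      have h3 : 0 < 2 * Real.sqrt (b ^ 2 + B ^ 2 / 4) - B := by
        linarith [sqrt_gt B b hB (ne_of_gt hb)]
      nlinarith
  intro a b hab
  have h := gm hab
  simp only at h ⊢
  have h2 : B * a < B * b := mul_lt_mul_of_pos_left hab hB
  rcases hε with h1 | h1 <;> subst h1 <;> nlinarith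

private lemma dom_pos (δ : ℝ) (n : ℕ) (hn : 1 ≤ n) {x : ℝ}
    (hx : x ∈ Set.Ioo (-((n : ℝ) ^ δ)) ((n : ℝ) ^ δ)) :
    0 < 1 - x ^ 2 * (n : ℝ) ^ (-(2 * δ)) := by
  have hn0 : (0 : ℝ) < n := by exact_mod_cast hn
  have hxx : x ^ 2 < ((n : ℝ) ^ δ) ^ 2 := sq_lt_sq' hx.1 hx.2
  have hp : 0 < (n : ℝ) ^ (-(2 * δ)) := Real.rpow_pos_of_pos hn0 _
  have key : ((n : ℝ) ^ δ) ^ 2 * (n : ℝ) ^ (-(2 * δ)) = 1 := by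
    rw [← Real.rpow_natCast ((n : ℝ) ^ δ) 2, ← Real.rpow_mul hn0.le, ← Real.rpow_add hn0,
      show δ * (2:ℕ) + -(2 * δ) = 0 by push_cast; ring, Real.rpow_zero]
  nlinarith [mul_lt_mul_of_pos_right hxx hp]

private lemma F_mono (B δ ε : ℝ) (hB : 0 < B) (hε : ε = 1 ∨ ε = -1)
    (n : ℕ) (hn : 1 ≤ n) {a b : ℝ}
    (ha : a ∈ Set.Ioo (-((n : ℝ) ^ δ)) ((n : ℝ) ^ δ))
    (hb : b ∈ Set.Ioo (-((n : ℝ) ^ δ)) ((n : ℝ) ^ δ)) (hab : a < b) :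
    (2 * Real.sqrt (a ^ 2 + B ^ 2 / 4) + ε * B) * a /
        Real.sqrt (1 - a ^ 2 * (n : ℝ) ^ (-(2 * δ))) <
      (2 * Real.sqrt (b ^ 2 + B ^ 2 / 4) + ε * B) * b /
        Real.sqrt (1 - b ^ 2 * (n : ℝ) ^ (-(2 * δ))) := by
  have hn0 : (0 : ℝ) < n := by exact_mod_cast hn
  have hp : 0 < (n : ℝ) ^ (-(2 * δ)) := Real.rpow_pos_of_pos hn0 _
  have hDa : 0 < Real.sqrt (1 - a ^ 2 * (n : ℝ) ^ (-(2 * δ))) :=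
    Real.sqrt_pos.2 (dom_pos δ n hn ha)
  have hDb : 0 < Real.sqrt (1 - b ^ 2 * (n : ℝ) ^ (-(2 * δ))) :=
    Real.sqrt_pos.2 (dom_pos δ n hn hb)
  have hgab : (2 * Real.sqrt (a ^ 2 + B ^ 2 / 4) + ε * B) * a <
      (2 * Real.sqrt (b ^ 2 + B ^ 2 / 4) + ε * B) * b := g_mono B ε hB hε hab
  rcases le_or_gt 0 a with h0a | h0a
  · have hga : 0 ≤ (2 * Real.sqrt (a ^ 2 + B ^ 2 / 4) + ε * B) * a :=
      mul_nonneg (coef_nonneg B ε a hB hε) h0a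
    have hDba : Real.sqrt (1 - b ^ 2 * (n : ℝ) ^ (-(2 * δ))) ≤
        Real.sqrt (1 - a ^ 2 * (n : ℝ) ^ (-(2 * δ))) := by
      apply Real.sqrt_le_sqrt
      have : a ^ 2 ≤ b ^ 2 := by nlinarith
      nlinarith [mul_le_mul_of_nonneg_right this hp.le]
    calc (2 * Real.sqrt (a ^ 2 + B ^ 2 / 4) + ε * B) * a /
          Real.sqrt (1 - a ^ 2 * (n : ℝ) ^ (-(2 * δ)))
        ≤ (2 * Real.sqrt (a ^ 2 + B ^ 2 / 4) + ε * B) * a /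
          Real.sqrt (1 - b ^ 2 * (n : ℝ) ^ (-(2 * δ))) :=
          div_le_div_of_nonneg_left hga hDb hDba
      _ < _ := div_lt_div_of_pos_right hgab hDb
  · rcases le_or_gt b 0 with h0b | h0b
    · have hgb : (2 * Real.sqrt (b ^ 2 + B ^ 2 / 4) + ε * B) * b ≤ 0 :=
        mul_nonpos_of_nonneg_of_nonpos (coef_nonneg B ε b hB hε) h0b
      have hDab : Real.sqrt (1 - a ^ 2 * (n : ℝ) ^ (-(2 * δ))) ≤
          Real.sqrt (1 - b ^ 2 * (n : ℝ) ^ (-(2 * δ))) := by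
        apply Real.sqrt_le_sqrt
        have : b ^ 2 ≤ a ^ 2 := by nlinarith
        nlinarith [mul_le_mul_of_nonneg_right this hp.le]
      rw [div_lt_div_iff₀ hDa hDb]
      nlinarith [mul_lt_mul_of_pos_right hgab hDb, mul_le_mul_of_nonpos_left hDab hgb]
    · have hga : (2 * Real.sqrt (a ^ 2 + B ^ 2 / 4) + ε * B) * a < 0 := by
        have h := g_mono B ε hB hε h0a
        simpa using h
      have hgb : 0 < (2 * Real.sqrt (b ^ 2 + B ^ 2 / 4) + ε * B) * b := by
        have h := g_mono B ε hB hε h0b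
        simpa using h
      exact lt_trans (div_neg_of_neg_of_pos hga hDa) (div_pos hgb hDb)

private lemma F_le_mono (B δ ε : ℝ) (hB : 0 < B) (hε : ε = 1 ∨ ε = -1)
    (n : ℕ) (hn : 1 ≤ n) {a b : ℝ}
    (ha : a ∈ Set.Ioo (-((n : ℝ) ^ δ)) ((n : ℝ) ^ δ))
    (hb : b ∈ Set.Ioo (-((n : ℝ) ^ δ)) ((n : ℝ) ^ δ)) (hab : a ≤ b) :
    (2 * Real.sqrt (a ^ 2 + B ^ 2 / 4) + ε * B) * a /
        Real.sqrt (1 - a ^ 2 * (n : ℝ) ^ (-(2 * δ))) ≤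
      (2 * Real.sqrt (b ^ 2 + B ^ 2 / 4) + ε * B) * b /
        Real.sqrt (1 - b ^ 2 * (n : ℝ) ^ (-(2 * δ))) := by
  rcases eq_or_lt_of_le hab with h | h
  · subst h; exact le_rfl
  · exact (F_mono B δ ε hB hε n hn ha hb h).le

/-- bracketing: if `F a < c = F x < F b` then `a < x < b`. -/
private lemma bracket (B δ ε : ℝ) (hB : 0 < B) (hε : ε = 1 ∨ ε = -1)
    (n : ℕ) (hn : 1 ≤ n) {x a b c : ℝ}
    (hx1 : x ∈ Set.Ioo (-((n : ℝ) ^ δ)) ((n : ℝ) ^ δ))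
    (hx3 : (2 * Real.sqrt (x ^ 2 + B ^ 2 / 4) + ε * B) * x /
        Real.sqrt (1 - x ^ 2 * (n : ℝ) ^ (-(2 * δ))) = c)
    (ha : a ∈ Set.Ioo (-((n : ℝ) ^ δ)) ((n : ℝ) ^ δ))
    (hb : b ∈ Set.Ioo (-((n : ℝ) ^ δ)) ((n : ℝ) ^ δ))
    (hFa : (2 * Real.sqrt (a ^ 2 + B ^ 2 / 4) + ε * B) * a /
        Real.sqrt (1 - a ^ 2 * (n : ℝ) ^ (-(2 * δ))) < c)
    (hFb : c < (2 * Real.sqrt (b ^ 2 + B ^ 2 / 4) + ε * B) * b /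
        Real.sqrt (1 - b ^ 2 * (n : ℝ) ^ (-(2 * δ)))) :
    a < x ∧ x < b := by
  constructor
  · by_contra h
    push_neg at h
    have := F_le_mono B δ ε hB hε n hn hx1 ha h
    rw [hx3] at this
    linarith
  · by_contra h
    push_neg at h
    have := F_le_mono B δ ε hB hε n hn hb hx1 h
    rw [hx3] at this
    linarith

private lemma rpow_tendsto_zero {p : ℝ} (hp : p < 0) :
    Tendsto (fun n : ℕ => (n : ℝ) ^ p) atTop (𝓝 0) := by
  have h := tendsto_rpow_neg_atTop (y := -p) (by linarith)
  simpa [Function.comp_def] using h.comp tendsto_natCast_atTop_atTop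

private lemma rpow_tendsto_top {p : ℝ} (hp : 0 < p) :
    Tendsto (fun n : ℕ => (n : ℝ) ^ p) atTop atTop :=
  (tendsto_rpow_atTop hp).comp tendsto_natCast_atTop_atTop

private lemma phi_mono : StrictMono (fun t : ℝ => 2 * |t| * t) := by
  intro a b hab
  simp only
  rcases le_or_gt 0 a with ha | ha
  · rw [abs_of_nonneg ha, abs_of_nonneg (by linarith : (0:ℝ) ≤ b)]; nlinarith
  rcases le_or_gt b 0 with hb | hb
  · rw [abs_of_neg ha, abs_of_nonpos hb]; nlinarith
  · rw [abs_of_neg ha, abs_of_pos hb]; nlinarith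

private lemma psi_mono (B : ℝ) (hB : 0 < B) : StrictMono (fun t : ℝ => 2 * t ^ 3 / B) := by
  intro a b hab
  simp only
  have : a ^ 3 < b ^ 3 := (Odd.strictMono_pow (by decide : Odd 3)) hab
  apply div_lt_div_of_pos_right (by linarith) hB

private lemma id_I (B δ ε t : ℝ) (n : ℕ) (hn : 1 ≤ n) :
    (2 * Real.sqrt ((t * (n : ℝ) ^ (δ - 1 / 2)) ^ 2 + B ^ 2 / 4) + ε * B) *
        (t * (n : ℝ) ^ (δ - 1 / 2)) /
        Real.sqrt (1 - (t * (n : ℝ) ^ (δ - 1 / 2)) ^ 2 * (n : ℝ) ^ (-(2 * δ))) *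
        (n : ℝ) ^ (1 - 2 * δ) =
      (2 * Real.sqrt (t ^ 2 + B ^ 2 / 4 * (n : ℝ) ^ (1 - 2 * δ)) +
          ε * B * (n : ℝ) ^ (1 / 2 - δ)) * t /
        Real.sqrt (1 - t ^ 2 * (n : ℝ) ^ (-(1 : ℝ))) := by
  have hn0 : (0 : ℝ) < n := by exact_mod_cast hn
  have h2 : ((n : ℝ) ^ (δ - 1 / 2)) ^ 2 = (n : ℝ) ^ (2 * δ - 1) := by
    rw [← Real.rpow_natCast ((n : ℝ) ^ (δ - 1 / 2)) 2, ← Real.rpow_mul hn0.le,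
      show (δ - 1 / 2) * ((2 : ℕ) : ℝ) = 2 * δ - 1 by push_cast; ring]
  have hx2 : (t * (n : ℝ) ^ (δ - 1 / 2)) ^ 2 = t ^ 2 * (n : ℝ) ^ (2 * δ - 1) := by
    rw [mul_pow, h2]
  have hden : (t * (n : ℝ) ^ (δ - 1 / 2)) ^ 2 * (n : ℝ) ^ (-(2 * δ)) =
      t ^ 2 * (n : ℝ) ^ (-(1 : ℝ)) := by
    rw [hx2, mul_assoc, ← Real.rpow_add hn0, show 2 * δ - 1 + -(2 * δ) = -(1 : ℝ) by ring]
  have hsq : Real.sqrt ((t * (n : ℝ) ^ (δ - 1 / 2)) ^ 2 + B ^ 2 / 4) =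
      (n : ℝ) ^ (δ - 1 / 2) *
        Real.sqrt (t ^ 2 + B ^ 2 / 4 * (n : ℝ) ^ (1 - 2 * δ)) := by
    have ha : 0 ≤ (n : ℝ) ^ (δ - 1 / 2) := Real.rpow_nonneg hn0.le _
    conv_rhs => rw [← Real.sqrt_sq ha, ← Real.sqrt_mul (sq_nonneg _)]
    congr 1
    have e0 : (n : ℝ) ^ (2 * δ - 1) * (n : ℝ) ^ (1 - 2 * δ) = 1 := by
      rw [← Real.rpow_add hn0, show 2 * δ - 1 + (1 - 2 * δ) = 0 by ring, Real.rpow_zero]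
    rw [mul_pow, h2]
    linear_combination (-(B ^ 2 / 4)) * e0
  rw [hden, hsq, div_mul_eq_mul_div]
  congr 1
  have e1 : (n : ℝ) ^ (δ - 1 / 2) * (n : ℝ) ^ (δ - 1 / 2) * (n : ℝ) ^ (1 - 2 * δ) = 1 := by
    rw [← Real.rpow_add hn0, ← Real.rpow_add hn0,
      show δ - 1 / 2 + (δ - 1 / 2) + (1 - 2 * δ) = 0 by ring, Real.rpow_zero]
  have e2 : (n : ℝ) ^ (δ - 1 / 2) * (n : ℝ) ^ (1 - 2 * δ) = (n : ℝ) ^ (1 / 2 - δ) := by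
    rw [← Real.rpow_add hn0, show δ - 1 / 2 + (1 - 2 * δ) = 1 / 2 - δ by ring]
  linear_combination (2 * Real.sqrt (t ^ 2 + B ^ 2 / 4 * (n : ℝ) ^ (1 - 2 * δ)) * t) * e1 +
    (ε * B * t) * e2

/-- case (i) limit -/
private lemma tendsto_I (B δ ε t : ℝ) (hδ : 1 / 2 < δ) :
    Tendsto (fun n : ℕ =>
      (2 * Real.sqrt ((t * (n : ℝ) ^ (δ - 1 / 2)) ^ 2 + B ^ 2 / 4) + ε * B) *
          (t * (n : ℝ) ^ (δ - 1 / 2)) /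
          Real.sqrt (1 - (t * (n : ℝ) ^ (δ - 1 / 2)) ^ 2 * (n : ℝ) ^ (-(2 * δ))) *
          (n : ℝ) ^ (1 - 2 * δ)) atTop (𝓝 (2 * |t| * t)) := by
  have h1 : Tendsto (fun n : ℕ => (n : ℝ) ^ (1 - 2 * δ)) atTop (𝓝 0) :=
    rpow_tendsto_zero (by linarith)
  have h2 : Tendsto (fun n : ℕ => (n : ℝ) ^ (1 / 2 - δ)) atTop (𝓝 0) :=
    rpow_tendsto_zero (by linarith)
  have h3 : Tendsto (fun n : ℕ => (n : ℝ) ^ (-(1 : ℝ))) atTop (𝓝 0) :=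
    rpow_tendsto_zero (by norm_num)
  have hin : Tendsto (fun n : ℕ => t ^ 2 + B ^ 2 / 4 * (n : ℝ) ^ (1 - 2 * δ)) atTop
      (𝓝 (t ^ 2)) := by
    have := tendsto_const_nhds (x := t ^ 2) (f := atTop (α := ℕ)) |>.add (h1.const_mul (B ^ 2 / 4))
    simpa using this
  have hsq : Tendsto (fun n : ℕ => Real.sqrt (t ^ 2 + B ^ 2 / 4 * (n : ℝ) ^ (1 - 2 * δ)))
      atTop (𝓝 |t|) := by
    have := (Real.continuous_sqrt.tendsto (t ^ 2)).comp hin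
    simpa [Real.sqrt_sq_eq_abs, Function.comp_def] using this
  have hnum : Tendsto (fun n : ℕ =>
      (2 * Real.sqrt (t ^ 2 + B ^ 2 / 4 * (n : ℝ) ^ (1 - 2 * δ)) +
        ε * B * (n : ℝ) ^ (1 / 2 - δ)) * t) atTop (𝓝 ((2 * |t| + ε * B * 0) * t)) :=
    (((hsq.const_mul 2).add (h2.const_mul (ε * B))).mul_const t)
  have hden : Tendsto (fun n : ℕ => Real.sqrt (1 - t ^ 2 * (n : ℝ) ^ (-(1 : ℝ)))) atTop
      (𝓝 1) := by
    have hi : Tendsto (fun n : ℕ => 1 - t ^ 2 * (n : ℝ) ^ (-(1 : ℝ))) atTop (𝓝 1) := by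
      have := tendsto_const_nhds (x := (1:ℝ)) (f := atTop (α := ℕ)) |>.sub (h3.const_mul (t ^ 2))
      simpa using this
    have := (Real.continuous_sqrt.tendsto 1).comp hi
    simpa [Function.comp_def] using this
  have hall := hnum.div hden (by norm_num)
  have : ((2 * |t| + ε * B * 0) * t) / 1 = 2 * |t| * t := by ring
  rw [this] at hall
  apply hall.congr'
  filter_upwards [eventually_ge_atTop 1] with n hn
  exact (id_I B δ ε t n hn).symm

private lemma tendsto_II (B δ ε x : ℝ) (hδ : 0 < δ) :
    Tendsto (fun n : ℕ =>
      (2 * Real.sqrt (x ^ 2 + B ^ 2 / 4) + ε * B) * x /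
        Real.sqrt (1 - x ^ 2 * (n : ℝ) ^ (-(2 * δ)))) atTop
      (𝓝 ((2 * Real.sqrt (x ^ 2 + B ^ 2 / 4) + ε * B) * x)) := by
  have h3 : Tendsto (fun n : ℕ => (n : ℝ) ^ (-(2 * δ))) atTop (𝓝 0) :=
    rpow_tendsto_zero (by linarith)
  have hi : Tendsto (fun n : ℕ => 1 - x ^ 2 * (n : ℝ) ^ (-(2 * δ))) atTop (𝓝 1) := by
    have := tendsto_const_nhds (x := (1 : ℝ)) (f := atTop (α := ℕ)) |>.sub
      (h3.const_mul (x ^ 2))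
    simpa using this
  have hden : Tendsto (fun n : ℕ => Real.sqrt (1 - x ^ 2 * (n : ℝ) ^ (-(2 * δ)))) atTop
      (𝓝 1) := by
    have := (Real.continuous_sqrt.tendsto 1).comp hi
    simpa [Function.comp_def] using this
  have := (tendsto_const_nhds (x := (2 * Real.sqrt (x ^ 2 + B ^ 2 / 4) + ε * B) * x)
    (f := atTop (α := ℕ))).div hden (by norm_num)
  simpa [Pi.div_def] using this

/-- case (iii) identity -/
private lemma id_III (B δ t : ℝ) (hB : 0 < B) (n : ℕ) (hn : 1 ≤ n) :
    (2 * Real.sqrt ((t * (n : ℝ) ^ ((2 * δ - 1) / 3)) ^ 2 + B ^ 2 / 4) + (-1) * B) *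
        (t * (n : ℝ) ^ ((2 * δ - 1) / 3)) /
        Real.sqrt (1 - (t * (n : ℝ) ^ ((2 * δ - 1) / 3)) ^ 2 * (n : ℝ) ^ (-(2 * δ))) *
        (n : ℝ) ^ (1 - 2 * δ) =
      4 * t ^ 3 /
        ((2 * Real.sqrt ((t * (n : ℝ) ^ ((2 * δ - 1) / 3)) ^ 2 + B ^ 2 / 4) + B) *
          Real.sqrt (1 - (t * (n : ℝ) ^ ((2 * δ - 1) / 3)) ^ 2 * (n : ℝ) ^ (-(2 * δ)))) := by
  have hn0 : (0 : ℝ) < n := by exact_mod_cast hn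
  set x := t * (n : ℝ) ^ ((2 * δ - 1) / 3) with hxdef
  have hu : (0 : ℝ) ≤ x ^ 2 + B ^ 2 / 4 := by positivity
  have hC : 0 < 2 * Real.sqrt (x ^ 2 + B ^ 2 / 4) + B := by
    have := Real.sqrt_nonneg (x ^ 2 + B ^ 2 / 4); linarith
  have hc : 2 * Real.sqrt (x ^ 2 + B ^ 2 / 4) + (-1) * B =
      4 * x ^ 2 / (2 * Real.sqrt (x ^ 2 + B ^ 2 / 4) + B) := by
    rw [eq_div_iff (ne_of_gt hC)]
    have hs := Real.sq_sqrt hu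
    nlinarith [hs]
  have e : x ^ 2 * x * (n : ℝ) ^ (1 - 2 * δ) = t ^ 3 := by
    have e1 : (n : ℝ) ^ ((2 * δ - 1) / 3) * (n : ℝ) ^ ((2 * δ - 1) / 3) *
        (n : ℝ) ^ ((2 * δ - 1) / 3) * (n : ℝ) ^ (1 - 2 * δ) = 1 := by
      rw [← Real.rpow_add hn0, ← Real.rpow_add hn0, ← Real.rpow_add hn0,
        show (2 * δ - 1) / 3 + (2 * δ - 1) / 3 + (2 * δ - 1) / 3 + (1 - 2 * δ) = 0 by ring,
        Real.rpow_zero]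
    rw [hxdef]
    linear_combination (t ^ 3) * e1
  rw [hc]
  calc 4 * x ^ 2 / (2 * Real.sqrt (x ^ 2 + B ^ 2 / 4) + B) * x /
        Real.sqrt (1 - x ^ 2 * (n : ℝ) ^ (-(2 * δ))) * (n : ℝ) ^ (1 - 2 * δ)
      = 4 * (x ^ 2 * x * (n : ℝ) ^ (1 - 2 * δ)) / (2 * Real.sqrt (x ^ 2 + B ^ 2 / 4) + B) /
        Real.sqrt (1 - x ^ 2 * (n : ℝ) ^ (-(2 * δ))) := by ring
    _ = 4 * t ^ 3 / (2 * Real.sqrt (x ^ 2 + B ^ 2 / 4) + B) /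
        Real.sqrt (1 - x ^ 2 * (n : ℝ) ^ (-(2 * δ))) := by rw [e]
    _ = _ := div_div _ _ _

/-- case (iii) limit -/
private lemma tendsto_III (B δ t : ℝ) (hB : 0 < B) (hδ : 0 < δ) (hδ2 : δ < 1 / 2) :
    Tendsto (fun n : ℕ =>
      (2 * Real.sqrt ((t * (n : ℝ) ^ ((2 * δ - 1) / 3)) ^ 2 + B ^ 2 / 4) + (-1) * B) *
          (t * (n : ℝ) ^ ((2 * δ - 1) / 3)) /
          Real.sqrt (1 - (t * (n : ℝ) ^ ((2 * δ - 1) / 3)) ^ 2 * (n : ℝ) ^ (-(2 * δ))) *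
          (n : ℝ) ^ (1 - 2 * δ)) atTop (𝓝 (2 * t ^ 3 / B)) := by
  have hx : Tendsto (fun n : ℕ => t * (n : ℝ) ^ ((2 * δ - 1) / 3)) atTop (𝓝 0) := by
    have := (rpow_tendsto_zero (p := (2 * δ - 1) / 3) (by linarith)).const_mul t
    simpa using this
  have hx2 : Tendsto (fun n : ℕ => (t * (n : ℝ) ^ ((2 * δ - 1) / 3)) ^ 2) atTop (𝓝 0) := by
    have := hx.pow 2
    simpa using this
  have hu : Tendsto (fun n : ℕ =>
      Real.sqrt ((t * (n : ℝ) ^ ((2 * δ - 1) / 3)) ^ 2 + B ^ 2 / 4)) atTop (𝓝 (B / 2)) := by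
    have hi : Tendsto (fun n : ℕ => (t * (n : ℝ) ^ ((2 * δ - 1) / 3)) ^ 2 + B ^ 2 / 4) atTop
        (𝓝 (B ^ 2 / 4)) := by
      have := hx2.add (tendsto_const_nhds (x := B ^ 2 / 4)); simpa using this
    have := (Real.continuous_sqrt.tendsto (B ^ 2 / 4)).comp hi
    simpa [show B ^ 2 / 4 = (B / 2) ^ 2 by ring, Real.sqrt_sq (by positivity : (0:ℝ) ≤ B / 2),
      Function.comp_def]
      using this
  have hD : Tendsto (fun n : ℕ =>
      Real.sqrt (1 - (t * (n : ℝ) ^ ((2 * δ - 1) / 3)) ^ 2 * (n : ℝ) ^ (-(2 * δ)))) atTop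
      (𝓝 1) := by
    have hi : Tendsto (fun n : ℕ =>
        1 - (t * (n : ℝ) ^ ((2 * δ - 1) / 3)) ^ 2 * (n : ℝ) ^ (-(2 * δ))) atTop (𝓝 1) := by
      have h0 := hx2.mul (rpow_tendsto_zero (p := -(2 * δ)) (by linarith))
      have := (tendsto_const_nhds (x := (1:ℝ)) (f := atTop (α := ℕ))).sub h0
      simpa using this
    have := (Real.continuous_sqrt.tendsto 1).comp hi
    simpa [Function.comp_def] using this
  have hcomb : Tendsto (fun n : ℕ =>
      (2 * Real.sqrt ((t * (n : ℝ) ^ ((2 * δ - 1) / 3)) ^ 2 + B ^ 2 / 4) + B) *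
        Real.sqrt (1 - (t * (n : ℝ) ^ ((2 * δ - 1) / 3)) ^ 2 * (n : ℝ) ^ (-(2 * δ)))) atTop
      (𝓝 ((2 * (B / 2) + B) * 1)) :=
    (((hu.const_mul 2).add tendsto_const_nhds).mul hD)
  have hne : ((2 * (B / 2) + B) * 1 : ℝ) ≠ 0 := by positivity
  have key := (tendsto_const_nhds (x := 4 * t ^ 3) (f := atTop (α := ℕ))).div hcomb hne
  have hval : 4 * t ^ 3 / ((2 * (B / 2) + B) * 1) = 2 * t ^ 3 / B := by
    field_simp; ring
  rw [hval] at key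
  apply key.congr'
  filter_upwards [eventually_ge_atTop 1] with n hn
  exact (id_III B δ t hB n hn).symm

private lemma event_mem (δ a t : ℝ) (h : a < δ) :
    ∀ᶠ n : ℕ in atTop, t * (n : ℝ) ^ a ∈ Set.Ioo (-((n : ℝ) ^ δ)) ((n : ℝ) ^ δ) := by
  have h1 : Tendsto (fun n : ℕ => (n : ℝ) ^ (δ - a)) atTop atTop :=
    rpow_tendsto_top (by linarith)
  filter_upwards [h1.eventually_gt_atTop |t|, eventually_gt_atTop 0] with n hn hn0
  have hn0' : (0 : ℝ) < n := by exact_mod_cast hn0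
  have hp : 0 < (n : ℝ) ^ a := Real.rpow_pos_of_pos hn0' a
  have key : |t| * (n : ℝ) ^ a < (n : ℝ) ^ δ := by
    have h2 := mul_lt_mul_of_pos_right hn hp
    rwa [← Real.rpow_add hn0', sub_add_cancel] at h2
  have habs : |t * (n : ℝ) ^ a| < (n : ℝ) ^ δ := by
    rwa [abs_mul, abs_of_pos hp]
  exact Set.mem_Ioo.2 (abs_lt.mp habs)

private lemma phi_val (γ r : ℝ) (hγ : 0 < γ) (hr : r ≠ 0) :
    2 * |Real.sign r * Real.sqrt (Real.pi / (2 * γ)) * |r| ^ (-(1 / 2 : ℝ))| *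
      (Real.sign r * Real.sqrt (Real.pi / (2 * γ)) * |r| ^ (-(1 / 2 : ℝ))) =
      Real.pi / (γ * r) := by
  have hA : (0 : ℝ) ≤ Real.pi / (2 * γ) := by positivity
  have h1 : Real.sqrt (Real.pi / (2 * γ)) ^ 2 = Real.pi / (2 * γ) := Real.sq_sqrt hA
  rcases hr.lt_or_gt with h | h
  · rw [Real.sign_of_neg h, abs_of_neg h]
    have hr0 : (0 : ℝ) < -r := by linarith
    have h2 : ((-r) ^ (-(1 / 2 : ℝ))) ^ 2 = (-r)⁻¹ := by
      rw [← Real.rpow_natCast ((-r) ^ (-(1 / 2 : ℝ))) 2, ← Real.rpow_mul hr0.le,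
        show (-(1 / 2 : ℝ)) * ((2 : ℕ) : ℝ) = -1 by push_cast; ring, Real.rpow_neg_one]
    have habs : |(-1 : ℝ) * Real.sqrt (Real.pi / (2 * γ)) * (-r) ^ (-(1 / 2 : ℝ))| =
        Real.sqrt (Real.pi / (2 * γ)) * (-r) ^ (-(1 / 2 : ℝ)) := by
      rw [abs_mul, abs_mul, abs_neg, abs_one, one_mul,
        abs_of_nonneg (Real.sqrt_nonneg _), abs_of_nonneg (Real.rpow_nonneg hr0.le _)]
    rw [habs]
    have hrr : 2 * (Real.sqrt (Real.pi / (2 * γ)) * (-r) ^ (-(1 / 2 : ℝ))) *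
        ((-1) * Real.sqrt (Real.pi / (2 * γ)) * (-r) ^ (-(1 / 2 : ℝ))) =
        -(2 * Real.sqrt (Real.pi / (2 * γ)) ^ 2 * ((-r) ^ (-(1 / 2 : ℝ))) ^ 2) := by ring
    rw [hrr, h1, h2]
    field_simp
  · rw [Real.sign_of_pos h, abs_of_pos h, one_mul]
    have h2 : (r ^ (-(1 / 2 : ℝ))) ^ 2 = r⁻¹ := by
      rw [← Real.rpow_natCast (r ^ (-(1 / 2 : ℝ))) 2, ← Real.rpow_mul h.le,
        show (-(1 / 2 : ℝ)) * ((2 : ℕ) : ℝ) = -1 by push_cast; ring, Real.rpow_neg_one]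
    have habs : |Real.sqrt (Real.pi / (2 * γ)) * r ^ (-(1 / 2 : ℝ))| =
        Real.sqrt (Real.pi / (2 * γ)) * r ^ (-(1 / 2 : ℝ)) := by
      rw [abs_mul, abs_of_nonneg (Real.sqrt_nonneg _),
        abs_of_nonneg (Real.rpow_nonneg h.le _)]
    rw [habs]
    have hrr : 2 * (Real.sqrt (Real.pi / (2 * γ)) * r ^ (-(1 / 2 : ℝ))) *
        (Real.sqrt (Real.pi / (2 * γ)) * r ^ (-(1 / 2 : ℝ))) =
        2 * Real.sqrt (Real.pi / (2 * γ)) ^ 2 * (r ^ (-(1 / 2 : ℝ))) ^ 2 := by ring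
    rw [hrr, h1, h2]
    field_simp

private lemma psi_val (γ B r : ℝ) (hγ : 0 < γ) (hB : 0 < B) (hr : r ≠ 0) :
    2 * (Real.sign r * (Real.pi / (2 * γ)) ^ ((1 : ℝ) / 3) * B ^ ((1 : ℝ) / 3) *
      |r| ^ (-(1 / 3 : ℝ))) ^ 3 / B = Real.pi / (γ * r) := by
  have hA : (0 : ℝ) ≤ Real.pi / (2 * γ) := by positivity
  have hu3 : ((Real.pi / (2 * γ)) ^ ((1 : ℝ) / 3)) ^ 3 = Real.pi / (2 * γ) := by
    rw [← Real.rpow_natCast ((Real.pi / (2 * γ)) ^ ((1 : ℝ) / 3)) 3, ← Real.rpow_mul hA,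
      show ((1 : ℝ) / 3) * ((3 : ℕ) : ℝ) = 1 by push_cast; ring, Real.rpow_one]
  have hv3 : (B ^ ((1 : ℝ) / 3)) ^ 3 = B := by
    rw [← Real.rpow_natCast (B ^ ((1 : ℝ) / 3)) 3, ← Real.rpow_mul hB.le,
      show ((1 : ℝ) / 3) * ((3 : ℕ) : ℝ) = 1 by push_cast; ring, Real.rpow_one]
  rcases hr.lt_or_gt with h | h
  · rw [Real.sign_of_neg h, abs_of_neg h]
    have hr0 : (0 : ℝ) < -r := by linarith
    have hw3 : ((-r) ^ (-(1 / 3 : ℝ))) ^ 3 = (-r)⁻¹ := by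
      rw [← Real.rpow_natCast ((-r) ^ (-(1 / 3 : ℝ))) 3, ← Real.rpow_mul hr0.le,
        show (-(1 / 3 : ℝ)) * ((3 : ℕ) : ℝ) = -1 by push_cast; ring, Real.rpow_neg_one]
    have hrr : 2 * ((-1 : ℝ) * (Real.pi / (2 * γ)) ^ ((1 : ℝ) / 3) * B ^ ((1 : ℝ) / 3) *
        (-r) ^ (-(1 / 3 : ℝ))) ^ 3 / B =
        -(2 * (((Real.pi / (2 * γ)) ^ ((1 : ℝ) / 3)) ^ 3 * (B ^ ((1 : ℝ) / 3)) ^ 3 *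
          ((-r) ^ (-(1 / 3 : ℝ))) ^ 3) / B) := by ring
    rw [hrr, hu3, hv3, hw3]
    field_simp
  · rw [Real.sign_of_pos h, abs_of_pos h, one_mul]
    have hw3 : (r ^ (-(1 / 3 : ℝ))) ^ 3 = r⁻¹ := by
      rw [← Real.rpow_natCast (r ^ (-(1 / 3 : ℝ))) 3, ← Real.rpow_mul h.le,
        show (-(1 / 3 : ℝ)) * ((3 : ℕ) : ℝ) = -1 by push_cast; ring, Real.rpow_neg_one]
    have hrr : 2 * ((Real.pi / (2 * γ)) ^ ((1 : ℝ) / 3) * B ^ ((1 : ℝ) / 3) *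
        r ^ (-(1 / 3 : ℝ))) ^ 3 / B =
        2 * (((Real.pi / (2 * γ)) ^ ((1 : ℝ) / 3)) ^ 3 * (B ^ ((1 : ℝ) / 3)) ^ 3 *
          (r ^ (-(1 / 3 : ℝ))) ^ 3) / B := by ring
    rw [hrr, hu3, hv3, hw3]
    field_simp

private lemma F_le_mono' (B δ ε : ℝ) (hB : 0 < B) (hε : ε = 1 ∨ ε = -1)
    (n : ℕ) (hn : 1 ≤ n) {a b : ℝ}
    (ha : a ∈ Set.Ioo (-((n : ℝ) ^ δ)) ((n : ℝ) ^ δ))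
    (hb : b ∈ Set.Ioo (-((n : ℝ) ^ δ)) ((n : ℝ) ^ δ)) (hab : a ≤ b) :
    (2 * Real.sqrt (a ^ 2 + B ^ 2 / 4) + ε * B) * a /
        Real.sqrt (1 - a ^ 2 * (n : ℝ) ^ (-(2 * δ))) ≤
      (2 * Real.sqrt (b ^ 2 + B ^ 2 / 4) + ε * B) * b /
        Real.sqrt (1 - b ^ 2 * (n : ℝ) ^ (-(2 * δ))) := by
  rcases eq_or_lt_of_le hab with h | h
  · subst h; exact le_rfl
  · exact (F_mono B δ ε hB hε n hn ha hb h).le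

private lemma bracket_lo (B δ ε : ℝ) (hB : 0 < B) (hε : ε = 1 ∨ ε = -1)
    (n : ℕ) (hn : 1 ≤ n) {x a c : ℝ}
    (hx1 : x ∈ Set.Ioo (-((n : ℝ) ^ δ)) ((n : ℝ) ^ δ))
    (hx3 : (2 * Real.sqrt (x ^ 2 + B ^ 2 / 4) + ε * B) * x /
        Real.sqrt (1 - x ^ 2 * (n : ℝ) ^ (-(2 * δ))) = c)
    (ha : a ∈ Set.Ioo (-((n : ℝ) ^ δ)) ((n : ℝ) ^ δ))
    (hFa : (2 * Real.sqrt (a ^ 2 + B ^ 2 / 4) + ε * B) * a /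
        Real.sqrt (1 - a ^ 2 * (n : ℝ) ^ (-(2 * δ))) < c) :
    a < x := by
  by_contra h
  push_neg at h
  have := F_le_mono' B δ ε hB hε n hn hx1 ha h
  rw [hx3] at this
  linarith

private lemma bracket_hi (B δ ε : ℝ) (hB : 0 < B) (hε : ε = 1 ∨ ε = -1)
    (n : ℕ) (hn : 1 ≤ n) {x b c : ℝ}
    (hx1 : x ∈ Set.Ioo (-((n : ℝ) ^ δ)) ((n : ℝ) ^ δ))
    (hx3 : (2 * Real.sqrt (x ^ 2 + B ^ 2 / 4) + ε * B) * x /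
        Real.sqrt (1 - x ^ 2 * (n : ℝ) ^ (-(2 * δ))) = c)
    (hb : b ∈ Set.Ioo (-((n : ℝ) ^ δ)) ((n : ℝ) ^ δ))
    (hFb : c < (2 * Real.sqrt (b ^ 2 + B ^ 2 / 4) + ε * B) * b /
        Real.sqrt (1 - b ^ 2 * (n : ℝ) ^ (-(2 * δ)))) :
    x < b := by
  by_contra h
  push_neg at h
  have := F_le_mono' B δ ε hB hε n hn hb hx1 h
  rw [hx3] at this
  linarith

/-- Fix `γ > 0`, `B > 0`, `δ > 0`.  For each sign `ε ∈ {+1, -1}`, each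
integer `N ≥ 1` and each `r ≠ 0` there is a unique `x ∈ (-N^δ, N^δ)` with `x·r > 0`
satisfying `(2√(x² + B²/4) + εB)·x / √(1 - x²·N^(-2δ)) = π·N^(2δ-1)/(γ r)`; denoting it
`x_{N,B,ε}(r)`:
(i) if `δ > 1/2`, `N^(1/2-δ)·x_{N,B,ε}(r) → sign(r)·√(π/(2γ))·|r|^(-1/2)` for both signs;
(ii) if `δ = 1/2`, `x_{N,B,ε}(r) → x_{B,ε}(r)` for both signs;
(iii) if `0 < δ < 1/2`, `N^((1-2δ)/3)·x_{N,B,-}(r) → sign(r)·(π/(2γ))^(1/3)·B^(1/3)·|r|^(-1/3)`. -/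
theorem stmt_11 (γ B δ : ℝ) (hγ : 0 < γ) (hB : 0 < B) (hδ : 0 < δ)
    (xN : ℝ → ℕ → ℝ → ℝ) (xB : ℝ → ℝ → ℝ)
    (hxB : ∀ ε : ℝ, (ε = 1 ∨ ε = -1) → ∀ r : ℝ, r ≠ 0 →
      (2 * Real.sqrt (xB ε r ^ 2 + B ^ 2 / 4) + ε * B) * xB ε r = Real.pi / (γ * r))
    (hxN : ∀ ε : ℝ, (ε = 1 ∨ ε = -1) → ∀ N : ℕ, 1 ≤ N → ∀ r : ℝ, r ≠ 0 →
      xN ε N r ∈ Set.Ioo (-((N : ℝ) ^ δ)) ((N : ℝ) ^ δ) ∧ 0 < xN ε N r * r ∧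
        (2 * Real.sqrt (xN ε N r ^ 2 + B ^ 2 / 4) + ε * B) * xN ε N r /
            Real.sqrt (1 - xN ε N r ^ 2 * (N : ℝ) ^ (-(2 * δ))) =
          Real.pi * (N : ℝ) ^ (2 * δ - 1) / (γ * r)) :
    (∀ ε : ℝ, (ε = 1 ∨ ε = -1) → ∀ N : ℕ, 1 ≤ N → ∀ r : ℝ, r ≠ 0 →
      ∃! x : ℝ, x ∈ Set.Ioo (-((N : ℝ) ^ δ)) ((N : ℝ) ^ δ) ∧ 0 < x * r ∧
        (2 * Real.sqrt (x ^ 2 + B ^ 2 / 4) + ε * B) * x /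
            Real.sqrt (1 - x ^ 2 * (N : ℝ) ^ (-(2 * δ))) =
          Real.pi * (N : ℝ) ^ (2 * δ - 1) / (γ * r)) ∧
    (1 / 2 < δ → ∀ ε : ℝ, (ε = 1 ∨ ε = -1) → ∀ r : ℝ, r ≠ 0 →
      Tendsto (fun N : ℕ => (N : ℝ) ^ (1 / 2 - δ) * xN ε N r) atTop
        (𝓝 (Real.sign r * Real.sqrt (Real.pi / (2 * γ)) * |r| ^ (-(1 / 2 : ℝ))))) ∧
    (δ = 1 / 2 → ∀ ε : ℝ, (ε = 1 ∨ ε = -1) → ∀ r : ℝ, r ≠ 0 →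
      Tendsto (fun N : ℕ => xN ε N r) atTop (𝓝 (xB ε r))) ∧
    (δ < 1 / 2 → ∀ r : ℝ, r ≠ 0 →
      Tendsto (fun N : ℕ => (N : ℝ) ^ ((1 - 2 * δ) / 3) * xN (-1) N r) atTop
        (𝓝 (Real.sign r * (Real.pi / (2 * γ)) ^ ((1 : ℝ) / 3) * B ^ ((1 : ℝ) / 3) *
          |r| ^ (-(1 / 3 : ℝ))))) := by
  refine ⟨?_, ?_, ?_, ?_⟩
  · -- uniqueness
    intro ε hε N hN r hr
    obtain ⟨h1, h2, h3⟩ := hxN ε hε N hN r hr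
    refine ⟨xN ε N r, ⟨h1, h2, h3⟩, ?_⟩
    rintro y ⟨hy1, hy2, hy3⟩
    rcases lt_trichotomy y (xN ε N r) with h | h | h
    · have := F_mono B δ ε hB hε N hN hy1 h1 h
      rw [hy3, h3] at this
      exact absurd this (lt_irrefl _)
    · exact h
    · have := F_mono B δ ε hB hε N hN h1 hy1 h
      rw [hy3, h3] at this
      exact absurd this (lt_irrefl _)
  · -- case (i): δ > 1/2
    intro hδ2 ε hε r hr
    set L := Real.sign r * Real.sqrt (Real.pi / (2 * γ)) * |r| ^ (-(1 / 2 : ℝ)) with hL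
    have hφL : 2 * |L| * L = Real.pi / (γ * r) := phi_val γ r hγ hr
    refine tendsto_order.2 ⟨?_, ?_⟩ <;> intro l hl
    · -- lower bound
      have hφ : 2 * |l| * l < Real.pi / (γ * r) := by
        rw [← hφL]; exact phi_mono hl
      have hev1 := (tendsto_I B δ ε l hδ2).eventually_lt_const hφ
      have hev2 := event_mem δ (δ - 1 / 2) l (by linarith)
      filter_upwards [hev1, hev2, eventually_ge_atTop 1] with n hFm hmem hn1
      obtain ⟨hx1, _, hx3⟩ := hxN ε hε n hn1 r hr
      have hn0 : (0 : ℝ) < n := by exact_mod_cast hn1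
      have hpow : (0 : ℝ) < (n : ℝ) ^ (1 - 2 * δ) := Real.rpow_pos_of_pos hn0 _
      have e' : (n : ℝ) ^ (2 * δ - 1) * (n : ℝ) ^ (1 - 2 * δ) = 1 := by
        rw [← Real.rpow_add hn0, show 2 * δ - 1 + (1 - 2 * δ) = 0 by ring, Real.rpow_zero]
      have hc : Real.pi * (n : ℝ) ^ (2 * δ - 1) / (γ * r) * (n : ℝ) ^ (1 - 2 * δ) =
          Real.pi / (γ * r) := by
        rw [div_mul_eq_mul_div, mul_assoc, e', mul_one]
      have hFa : (2 * Real.sqrt ((l * (n : ℝ) ^ (δ - 1 / 2)) ^ 2 + B ^ 2 / 4) + ε * B) *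
          (l * (n : ℝ) ^ (δ - 1 / 2)) /
          Real.sqrt (1 - (l * (n : ℝ) ^ (δ - 1 / 2)) ^ 2 * (n : ℝ) ^ (-(2 * δ))) <
          Real.pi * (n : ℝ) ^ (2 * δ - 1) / (γ * r) := by
        have h := hFm
        rw [← hc] at h
        exact lt_of_mul_lt_mul_right h hpow.le
      have hlt := bracket_lo B δ ε hB hε n hn1 hx1 hx3 hmem hFa
      have hp2 : (0 : ℝ) < (n : ℝ) ^ (1 / 2 - δ) := Real.rpow_pos_of_pos hn0 _
      have e2 : (n : ℝ) ^ (1 / 2 - δ) * (n : ℝ) ^ (δ - 1 / 2) = 1 := by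
        rw [← Real.rpow_add hn0, show 1 / 2 - δ + (δ - 1 / 2) = 0 by ring, Real.rpow_zero]
      calc l = (n : ℝ) ^ (1 / 2 - δ) * (l * (n : ℝ) ^ (δ - 1 / 2)) := by
              rw [show (n : ℝ) ^ (1 / 2 - δ) * (l * (n : ℝ) ^ (δ - 1 / 2)) =
                l * ((n : ℝ) ^ (1 / 2 - δ) * (n : ℝ) ^ (δ - 1 / 2)) by ring, e2, mul_one]
        _ < (n : ℝ) ^ (1 / 2 - δ) * xN ε n r := by
              exact mul_lt_mul_of_pos_left hlt hp2
    · -- upper bound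
      have hφ : Real.pi / (γ * r) < 2 * |l| * l := by
        rw [← hφL]; exact phi_mono hl
      have hev1 := (tendsto_I B δ ε l hδ2).eventually_const_lt hφ
      have hev2 := event_mem δ (δ - 1 / 2) l (by linarith)
      filter_upwards [hev1, hev2, eventually_ge_atTop 1] with n hFm hmem hn1
      obtain ⟨hx1, _, hx3⟩ := hxN ε hε n hn1 r hr
      have hn0 : (0 : ℝ) < n := by exact_mod_cast hn1
      have hpow : (0 : ℝ) < (n : ℝ) ^ (1 - 2 * δ) := Real.rpow_pos_of_pos hn0 _
      have e' : (n : ℝ) ^ (2 * δ - 1) * (n : ℝ) ^ (1 - 2 * δ) = 1 := by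
        rw [← Real.rpow_add hn0, show 2 * δ - 1 + (1 - 2 * δ) = 0 by ring, Real.rpow_zero]
      have hc : Real.pi * (n : ℝ) ^ (2 * δ - 1) / (γ * r) * (n : ℝ) ^ (1 - 2 * δ) =
          Real.pi / (γ * r) := by
        rw [div_mul_eq_mul_div, mul_assoc, e', mul_one]
      have hFb : Real.pi * (n : ℝ) ^ (2 * δ - 1) / (γ * r) <
          (2 * Real.sqrt ((l * (n : ℝ) ^ (δ - 1 / 2)) ^ 2 + B ^ 2 / 4) + ε * B) *
          (l * (n : ℝ) ^ (δ - 1 / 2)) /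
          Real.sqrt (1 - (l * (n : ℝ) ^ (δ - 1 / 2)) ^ 2 * (n : ℝ) ^ (-(2 * δ))) := by
        have h := hFm
        rw [← hc] at h
        exact lt_of_mul_lt_mul_right h hpow.le
      have hlt := bracket_hi B δ ε hB hε n hn1 hx1 hx3 hmem hFb
      have hp2 : (0 : ℝ) < (n : ℝ) ^ (1 / 2 - δ) := Real.rpow_pos_of_pos hn0 _
      have e2 : (n : ℝ) ^ (1 / 2 - δ) * (n : ℝ) ^ (δ - 1 / 2) = 1 := by
        rw [← Real.rpow_add hn0, show 1 / 2 - δ + (δ - 1 / 2) = 0 by ring, Real.rpow_zero]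
      calc (n : ℝ) ^ (1 / 2 - δ) * xN ε n r
          < (n : ℝ) ^ (1 / 2 - δ) * (l * (n : ℝ) ^ (δ - 1 / 2)) :=
            mul_lt_mul_of_pos_left hlt hp2
        _ = l := by
              rw [show (n : ℝ) ^ (1 / 2 - δ) * (l * (n : ℝ) ^ (δ - 1 / 2)) =
                l * ((n : ℝ) ^ (1 / 2 - δ) * (n : ℝ) ^ (δ - 1 / 2)) by ring, e2, mul_one]
  · -- case (ii): δ = 1/2
    intro hδ2 ε hε r hr
    have hgB := hxB ε hε r hr
    refine tendsto_order.2 ⟨?_, ?_⟩ <;> intro l hl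
    · have hg : (2 * Real.sqrt (l ^ 2 + B ^ 2 / 4) + ε * B) * l < Real.pi / (γ * r) := by
        rw [← hgB]; exact g_mono B ε hB hε hl
      have hev1 := (tendsto_II B δ ε l hδ).eventually_lt_const hg
      have hev2 : ∀ᶠ n : ℕ in atTop, l ∈ Set.Ioo (-((n : ℝ) ^ δ)) ((n : ℝ) ^ δ) := by
        filter_upwards [(rpow_tendsto_top hδ).eventually_gt_atTop |l|] with n hn
        exact Set.mem_Ioo.2 (abs_lt.mp hn)
      filter_upwards [hev1, hev2, eventually_ge_atTop 1] with n hFm hmem hn1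
      obtain ⟨hx1, _, hx3⟩ := hxN ε hε n hn1 r hr
      have hn0 : (0 : ℝ) < n := by exact_mod_cast hn1
      have hcn : Real.pi * (n : ℝ) ^ (2 * δ - 1) / (γ * r) = Real.pi / (γ * r) := by
        rw [hδ2, show 2 * (1 / 2 : ℝ) - 1 = 0 by norm_num, Real.rpow_zero, mul_one]
      exact bracket_lo B δ ε hB hε n hn1 hx1 hx3 hmem (by rw [hcn]; exact hFm)
    · have hg : Real.pi / (γ * r) < (2 * Real.sqrt (l ^ 2 + B ^ 2 / 4) + ε * B) * l := by
        rw [← hgB]; exact g_mono B ε hB hε hl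
      have hev1 := (tendsto_II B δ ε l hδ).eventually_const_lt hg
      have hev2 : ∀ᶠ n : ℕ in atTop, l ∈ Set.Ioo (-((n : ℝ) ^ δ)) ((n : ℝ) ^ δ) := by
        filter_upwards [(rpow_tendsto_top hδ).eventually_gt_atTop |l|] with n hn
        exact Set.mem_Ioo.2 (abs_lt.mp hn)
      filter_upwards [hev1, hev2, eventually_ge_atTop 1] with n hFm hmem hn1
      obtain ⟨hx1, _, hx3⟩ := hxN ε hε n hn1 r hr
      have hcn : Real.pi * (n : ℝ) ^ (2 * δ - 1) / (γ * r) = Real.pi / (γ * r) := by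
        rw [hδ2, show 2 * (1 / 2 : ℝ) - 1 = 0 by norm_num, Real.rpow_zero, mul_one]
      exact bracket_hi B δ ε hB hε n hn1 hx1 hx3 hmem (by rw [hcn]; exact hFm)
  · -- case (iii): δ < 1/2
    intro hδ2 r hr
    have hεm : (-1 : ℝ) = 1 ∨ (-1 : ℝ) = -1 := Or.inr rfl
    set L := Real.sign r * (Real.pi / (2 * γ)) ^ ((1 : ℝ) / 3) * B ^ ((1 : ℝ) / 3) *
      |r| ^ (-(1 / 3 : ℝ)) with hL
    have hψL : 2 * L ^ 3 / B = Real.pi / (γ * r) := psi_val γ B r hγ hB hr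
    refine tendsto_order.2 ⟨?_, ?_⟩ <;> intro l hl
    · have hψ : 2 * l ^ 3 / B < Real.pi / (γ * r) := by
        rw [← hψL]; exact psi_mono B hB hl
      have hev1 := (tendsto_III B δ l hB hδ hδ2).eventually_lt_const hψ
      have hev2 := event_mem δ ((2 * δ - 1) / 3) l (by linarith)
      filter_upwards [hev1, hev2, eventually_ge_atTop 1] with n hFm hmem hn1
      obtain ⟨hx1, _, hx3⟩ := hxN (-1) hεm n hn1 r hr
      have hn0 : (0 : ℝ) < n := by exact_mod_cast hn1
      have hpow : (0 : ℝ) < (n : ℝ) ^ (1 - 2 * δ) := Real.rpow_pos_of_pos hn0 _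
      have e' : (n : ℝ) ^ (2 * δ - 1) * (n : ℝ) ^ (1 - 2 * δ) = 1 := by
        rw [← Real.rpow_add hn0, show 2 * δ - 1 + (1 - 2 * δ) = 0 by ring, Real.rpow_zero]
      have hc : Real.pi * (n : ℝ) ^ (2 * δ - 1) / (γ * r) * (n : ℝ) ^ (1 - 2 * δ) =
          Real.pi / (γ * r) := by
        rw [div_mul_eq_mul_div, mul_assoc, e', mul_one]
      have hFa : (2 * Real.sqrt ((l * (n : ℝ) ^ ((2 * δ - 1) / 3)) ^ 2 + B ^ 2 / 4) +
          (-1) * B) * (l * (n : ℝ) ^ ((2 * δ - 1) / 3)) /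
          Real.sqrt (1 - (l * (n : ℝ) ^ ((2 * δ - 1) / 3)) ^ 2 * (n : ℝ) ^ (-(2 * δ))) <
          Real.pi * (n : ℝ) ^ (2 * δ - 1) / (γ * r) := by
        have h := hFm
        rw [← hc] at h
        exact lt_of_mul_lt_mul_right h hpow.le
      have hlt := bracket_lo B δ (-1) hB hεm n hn1 hx1 hx3 hmem hFa
      have hp2 : (0 : ℝ) < (n : ℝ) ^ ((1 - 2 * δ) / 3) := Real.rpow_pos_of_pos hn0 _
      have e2 : (n : ℝ) ^ ((1 - 2 * δ) / 3) * (n : ℝ) ^ ((2 * δ - 1) / 3) = 1 := by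
        rw [← Real.rpow_add hn0, show (1 - 2 * δ) / 3 + (2 * δ - 1) / 3 = 0 by ring,
          Real.rpow_zero]
      calc l = (n : ℝ) ^ ((1 - 2 * δ) / 3) * (l * (n : ℝ) ^ ((2 * δ - 1) / 3)) := by
              rw [show (n : ℝ) ^ ((1 - 2 * δ) / 3) * (l * (n : ℝ) ^ ((2 * δ - 1) / 3)) =
                l * ((n : ℝ) ^ ((1 - 2 * δ) / 3) * (n : ℝ) ^ ((2 * δ - 1) / 3)) by ring,
                e2, mul_one]
        _ < (n : ℝ) ^ ((1 - 2 * δ) / 3) * xN (-1) n r :=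
              mul_lt_mul_of_pos_left hlt hp2
    · have hψ : Real.pi / (γ * r) < 2 * l ^ 3 / B := by
        rw [← hψL]; exact psi_mono B hB hl
      have hev1 := (tendsto_III B δ l hB hδ hδ2).eventually_const_lt hψ
      have hev2 := event_mem δ ((2 * δ - 1) / 3) l (by linarith)
      filter_upwards [hev1, hev2, eventually_ge_atTop 1] with n hFm hmem hn1
      obtain ⟨hx1, _, hx3⟩ := hxN (-1) hεm n hn1 r hr
      have hn0 : (0 : ℝ) < n := by exact_mod_cast hn1
      have hpow : (0 : ℝ) < (n : ℝ) ^ (1 - 2 * δ) := Real.rpow_pos_of_pos hn0 _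
      have e' : (n : ℝ) ^ (2 * δ - 1) * (n : ℝ) ^ (1 - 2 * δ) = 1 := by
        rw [← Real.rpow_add hn0, show 2 * δ - 1 + (1 - 2 * δ) = 0 by ring, Real.rpow_zero]
      have hc : Real.pi * (n : ℝ) ^ (2 * δ - 1) / (γ * r) * (n : ℝ) ^ (1 - 2 * δ) =
          Real.pi / (γ * r) := by
        rw [div_mul_eq_mul_div, mul_assoc, e', mul_one]
      have hFb : Real.pi * (n : ℝ) ^ (2 * δ - 1) / (γ * r) <
          (2 * Real.sqrt ((l * (n : ℝ) ^ ((2 * δ - 1) / 3)) ^ 2 + B ^ 2 / 4) +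
          (-1) * B) * (l * (n : ℝ) ^ ((2 * δ - 1) / 3)) /
          Real.sqrt (1 - (l * (n : ℝ) ^ ((2 * δ - 1) / 3)) ^ 2 * (n : ℝ) ^ (-(2 * δ))) := by
        have h := hFm
        rw [← hc] at h
        exact lt_of_mul_lt_mul_right h hpow.le
      have hlt := bracket_hi B δ (-1) hB hεm n hn1 hx1 hx3 hmem hFb
      have hp2 : (0 : ℝ) < (n : ℝ) ^ ((1 - 2 * δ) / 3) := Real.rpow_pos_of_pos hn0 _
      have e2 : (n : ℝ) ^ ((1 - 2 * δ) / 3) * (n : ℝ) ^ ((2 * δ - 1) / 3) = 1 := by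
        rw [← Real.rpow_add hn0, show (1 - 2 * δ) / 3 + (2 * δ - 1) / 3 = 0 by ring,
          Real.rpow_zero]
      calc (n : ℝ) ^ ((1 - 2 * δ) / 3) * xN (-1) n r
          < (n : ℝ) ^ ((1 - 2 * δ) / 3) * (l * (n : ℝ) ^ ((2 * δ - 1) / 3)) :=
            mul_lt_mul_of_pos_left hlt hp2
        _ = l := by
              rw [show (n : ℝ) ^ ((1 - 2 * δ) / 3) * (l * (n : ℝ) ^ ((2 * δ - 1) / 3)) =
                l * ((n : ℝ) ^ ((1 - 2 * δ) / 3) * (n : ℝ) ^ ((2 * δ - 1) / 3)) by ring,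
                e2, mul_one]
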